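/- Let N be an integer with N ≥ 2. Then N is quasi monomially irreducible if and only if N = p^n for some prime p and integer n ≥ 1, or N = 2^n·3^m for some integers n ≥ 1 and m ≥ 1. -/

import Mathlib

open Matrix

/-- The elementary matrix `[[a, -1], [1, 0]]` over `ZMod N`. -/
def genMat {N : ℕ} (a : ZMod N) : Matrix (Fin 2) (Fin 2) (ZMod N) :=
  !![a, -1; 1, 0]

/-- `Mword [a₁, …, aₙ]` is the matrix `Mₙ(a₁, …, aₙ) = genMat aₙ * ⋯ * genMat a₁`. -/
def Mword {N : ℕ} (l : List (ZMod N)) : Matrix (Fin 2) (Fin 2) (ZMod N) :=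
  (l.reverse.map genMat).prod

/-- A tuple (encoded as a list) is a solution of `(E_N)` if its matrix is `±Id`. -/
def IsSolutionE {N : ℕ} (l : List (ZMod N)) : Prop :=
  Mword l = 1 ∨ Mword l = -1

/-- The size of the `k`-monomial minimal solution of `(E_N)`: the least positive `n`
such that the constant `n`-tuple `(k, …, k)` is a solution of `(E_N)`. -/
noncomputable def monomialSize (N : ℕ) (k : ZMod N) : ℕ :=
  sInf {n : ℕ | 0 < n ∧ IsSolutionE (List.replicate n k)}

/-- The `k`-monomial minimal solution of `(E_N)`. -/
noncomputable def monoSol (N : ℕ) (k : ZMod N) : List (ZMod N) :=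
  List.replicate (monomialSize N k) k

/-- The sum `⊕` of two tuples:
`(a₁,…,aₘ) ⊕ (b₁,…,bₗ) = (a₁+bₗ, a₂, …, aₘ₋₁, aₘ+b₁, b₂, …, bₗ₋₁)`. -/
def oplus {N : ℕ} (a b : List (ZMod N)) : List (ZMod N) :=
  (a.headD 0 + b.getLastD 0) ::
    ((a.drop 1).dropLast ++ (a.getLastD 0 + b.headD 0) :: (b.drop 1).dropLast)

/-- Two tuples are equivalent (`∼`) if one is obtained from the other by a cyclic
permutation, possibly composed with order reversal. -/
def TupEquiv {N : ℕ} (c d : List (ZMod N)) : Prop :=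
  (∃ i, d = c.rotate i) ∨ (∃ i, d = c.reverse.rotate i)

/-- A tuple is reducible if it is equivalent to a sum `a ⊕ b` where `b` is a solution of
`(E_N)` and both `a`, `b` have length at least `3`. -/
def IsReducibleE {N : ℕ} (c : List (ZMod N)) : Prop :=
  ∃ a b : List (ZMod N), 3 ≤ a.length ∧ 3 ≤ b.length ∧ IsSolutionE b ∧
    TupEquiv c (oplus a b)

/-- An irreducible solution of `(E_N)`: a solution of size at least `3` that is not
reducible (the solution `(0,0)` is not considered irreducible). -/
def IsIrreducibleE {N : ℕ} (c : List (ZMod N)) : Prop :=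
  IsSolutionE c ∧ 3 ≤ c.length ∧ ¬ IsReducibleE c

/-- A reducible solution of `(E_N)`: a solution that is not irreducible. -/
def IsReducibleSol {N : ℕ} (c : List (ZMod N)) : Prop :=
  IsSolutionE c ∧ ¬ IsIrreducibleE c

/-- `N` is monomially irreducible if for every nonzero `k ∈ ZMod N` the `k`-monomial
minimal solution of `(E_N)` is irreducible. -/
def MonomiallyIrreducible (N : ℕ) : Prop :=
  ∀ k : ZMod N, k ≠ 0 → IsIrreducibleE (monoSol N k)

/-- `N` is quasi monomially irreducible if for every integer `k` coprime to `N` the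
`(k mod N)`-monomial minimal solution of `(E_N)` is irreducible. -/
def QuasiMonomiallyIrreducible (N : ℕ) : Prop :=
  ∀ k : ℤ, Int.gcd k (N : ℤ) = 1 → IsIrreducibleE (monoSol N (k : ZMod N))

/-- `N` is semi monomially irreducible: if `N` is even but not divisible by `4`, this
requires that for every integer `a` coprime to `N/2` the `(2a mod N)`-monomial minimal
solution of `(E_N)` is irreducible; otherwise (i.e. `N` odd or divisible by `4`), it
requires the same for every integer `a` coprime to `N`. -/
def SemiMonomiallyIrreducible (N : ℕ) : Prop :=
  if 2 ∣ N ∧ ¬ (4 ∣ N) then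
    ∀ a : ℤ, Int.gcd a ((N / 2 : ℕ) : ℤ) = 1 →
      IsIrreducibleE (monoSol N ((2 * a : ℤ) : ZMod N))
  else
    ∀ a : ℤ, Int.gcd a (N : ℤ) = 1 →
      IsIrreducibleE (monoSol N ((2 * a : ℤ) : ZMod N))

section Core
variable {N : ℕ}

lemma Mword_replicate (k : ZMod N) (n : ℕ) :
    Mword (List.replicate n k) = genMat k ^ n := by
  simp [Mword, List.reverse_replicate, List.map_replicate, List.prod_replicate]

lemma Mword_sandwich (x y k : ZMod N) (j : ℕ) :
    Mword (x :: (List.replicate j k ++ [y])) =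
      genMat y * (genMat k ^ j * genMat x) := by
  simp [Mword, List.reverse_append, List.reverse_replicate, List.prod_append,
    List.map_append, List.map_replicate, List.prod_replicate, mul_assoc]

/-- the continuant `K_j = (M^j)₀₀`. -/
def KK (k : ZMod N) (j : ℕ) : ZMod N := (genMat k ^ j) 0 0

lemma KK_zero (k : ZMod N) : KK k 0 = 1 := by simp [KK, Matrix.one_apply]

lemma genMat_pow_succ (k : ZMod N) : ∀ i : ℕ,
    genMat k ^ (i + 1) = !![KK k (i+1), -(KK k i); KK k i, KK k (i+1) - k * KK k i]
  | 0 => by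
    have h0 : KK k 0 = 1 := KK_zero k
    have h1 : KK k 1 = k := by simp [KK, genMat, pow_one]
    rw [pow_one, h0, h1]
    simp [genMat]
  | (i+1) => by
    have ih := genMat_pow_succ k i
    have hmul : genMat k ^ (i + 1 + 1) = genMat k * genMat k ^ (i+1) := by
      rw [← pow_succ']
    have hexp : genMat k * genMat k ^ (i+1) =
        !![k * KK k (i+1) - KK k i, -(KK k (i+1));
           KK k (i+1), -(KK k i)] := by
      rw [ih]
      show (!![k, -1; 1, 0] : Matrix (Fin 2) (Fin 2) (ZMod N)) * _ = _
      rw [Matrix.mul_fin_two]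
      congr 1 <;> ring_nf
    have hK : KK k (i+1+1) = k * KK k (i+1) - KK k i := by
      show (genMat k ^ (i+1+1)) 0 0 = _
      rw [hmul, hexp]
      simp
    rw [hmul, hexp, hK]
    congr 1
    ring
lemma KK_rec (k : ZMod N) (i : ℕ) : KK k (i+2) = k * KK k (i+1) - KK k i := by
  have h2 := genMat_pow_succ k i
  show (genMat k ^ (i+2)) 0 0 = _
  rw [show i+2 = i+1+1 from rfl, pow_succ', h2]
  simp [genMat, Matrix.mul_apply, Fin.sum_univ_two]
  ring

lemma KK_det (k : ZMod N) (i : ℕ) :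
    KK k (i+1) * (KK k (i+1) - k * KK k i) + KK k i * KK k i = 1 := by
  have hdet : (genMat k ^ (i+1)).det = 1 := by
    rw [Matrix.det_pow]
    have : (genMat k).det = 1 := by
      show (!![k, -1; 1, 0] : Matrix (Fin 2) (Fin 2) (ZMod N)).det = 1
      rw [Matrix.det_fin_two_of]; ring
    rw [this, one_pow]
  rw [genMat_pow_succ k i, Matrix.det_fin_two_of] at hdet
  linear_combination hdet

end Core

section Size
variable {N : ℕ}

lemma exists_pow_eq_one [NeZero N] (k : ZMod N) :
    ∃ n, 0 < n ∧ genMat k ^ n = 1 := by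
  have hdet : IsUnit (genMat k).det := by
    have : (genMat k).det = 1 := by
      show (!![k, -1; 1, 0] : Matrix (Fin 2) (Fin 2) (ZMod N)).det = 1
      rw [Matrix.det_fin_two_of]; ring
    rw [this]; exact isUnit_one
  have hu : IsUnit (genMat k) := (Matrix.isUnit_iff_isUnit_det _).2 hdet
  obtain ⟨u, hu⟩ := hu
  refine ⟨orderOf u, orderOf_pos u, ?_⟩
  have : (u ^ orderOf u : (Matrix (Fin 2) (Fin 2) (ZMod N))ˣ) = 1 := pow_orderOf_eq_one u
  calc genMat k ^ orderOf u = ((u : Matrix (Fin 2) (Fin 2) (ZMod N))) ^ orderOf u := by rw [hu]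
    _ = ((u ^ orderOf u : (Matrix (Fin 2) (Fin 2) (ZMod N))ˣ) : Matrix (Fin 2) (Fin 2) (ZMod N)) := by
        rw [Units.val_pow_eq_pow_val]
    _ = 1 := by rw [this]; rfl

lemma mSize_mem [NeZero N] (k : ZMod N) :
    0 < monomialSize N k ∧ IsSolutionE (List.replicate (monomialSize N k) k) := by
  have hne : {n : ℕ | 0 < n ∧ IsSolutionE (List.replicate n k)}.Nonempty := by
    obtain ⟨n, hn, h1⟩ := exists_pow_eq_one k
    exact ⟨n, hn, Or.inl (by rw [Mword_replicate]; exact h1)⟩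
  exact Nat.sInf_mem hne

lemma mSize_sol [NeZero N] (k : ZMod N) :
    genMat k ^ (monomialSize N k) = 1 ∨ genMat k ^ (monomialSize N k) = -1 := by
  have h := (mSize_mem k).2
  rwa [IsSolutionE, Mword_replicate] at h

lemma not_small [NeZero N] (k : ZMod N) (r : ℕ) (h1 : 0 < r) (h2 : r < monomialSize N k) :
    ¬(genMat k ^ r = 1 ∨ genMat k ^ r = -1) := by
  intro h
  have : r ∈ {n : ℕ | 0 < n ∧ IsSolutionE (List.replicate n k)} :=
    ⟨h1, by rw [IsSolutionE, Mword_replicate]; exact h⟩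
  have h4 : monomialSize N k ≤ r := Nat.sInf_le this
  omega

lemma zmod_one_ne_zero (hN : 2 ≤ N) : (1 : ZMod N) ≠ 0 := by
  haveI : Fact (1 < N) := ⟨by omega⟩
  exact one_ne_zero

lemma three_le_mSize [NeZero N] (hN : 2 ≤ N) {k : ZMod N} (hk : IsUnit k) :
    3 ≤ monomialSize N k := by
  haveI : Fact (1 < N) := ⟨by omega⟩
  have h1 : monomialSize N k ≠ 1 := by
    intro h
    have := mSize_sol k
    rw [h, pow_one] at this
    rcases this with h' | h'
    · have h'' := congrFun (congrFun h' 0) 1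
      simp [genMat, Matrix.one_apply] at h''
    · have h3 := congrFun (congrFun h' 1) 0
      simp [genMat, Matrix.one_apply, Matrix.neg_apply] at h3
  have h2 : monomialSize N k ≠ 2 := by
    intro h
    have := mSize_sol k
    rw [h, genMat_pow_succ k 1] at this
    have hK1 : KK k 1 = k := by simp [KK, genMat, pow_one]
    have hk0 : k = 0 := by
      rcases this with h' | h' <;>
      · have h'' := congrFun (congrFun h' 1) 0
        rw [hK1] at h''
        simpa [Matrix.one_apply] using h''
    rw [hk0] at hk
    exact not_isUnit_zero hk
  have := (mSize_mem k).1
  omega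

end Size

section Criterion
variable {N : ℕ}

lemma neg_one_fin_two {α : Type*} [Ring α] :
    (-1 : Matrix (Fin 2) (Fin 2) α) = !![-1, 0; 0, -1] := by
  rw [Matrix.one_fin_two]
  ext i j
  fin_cases i <;> fin_cases j <;> simp

lemma left_inv_genMat (x : ZMod N) :
    (!![0, 1; -1, x] : Matrix (Fin 2) (Fin 2) (ZMod N)) * genMat x = 1 := by
  show _ * (!![x, -1; 1, 0] : Matrix (Fin 2) (Fin 2) (ZMod N)) = 1
  rw [Matrix.mul_fin_two, Matrix.one_fin_two]
  congr 1 <;> ring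

lemma right_inv_genMat (x : ZMod N) :
    genMat x * (!![0, 1; -1, x] : Matrix (Fin 2) (Fin 2) (ZMod N)) = 1 := by
  show (!![x, -1; 1, 0] : Matrix (Fin 2) (Fin 2) (ZMod N)) * _ = 1
  rw [Matrix.mul_fin_two, Matrix.one_fin_two]
  congr 1 <;> ring

lemma sandwich_extract {x y : ZMod N} {P Z : Matrix (Fin 2) (Fin 2) (ZMod N)}
    (h : genMat y * (P * genMat x) = Z) :
    P = !![0, 1; -1, y] * Z * !![0, 1; -1, x] := by
  calc P = 1 * P * 1 := by rw [one_mul, mul_one]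
    _ = (!![0,1;-1,y] * genMat y) * P * (genMat x * !![0,1;-1,x]) := by
        rw [left_inv_genMat, right_inv_genMat]
    _ = !![0,1;-1,y] * (genMat y * (P * genMat x)) * !![0,1;-1,x] := by
        simp only [mul_assoc]
    _ = !![0,1;-1,y] * Z * !![0,1;-1,x] := by rw [h]

lemma entry_of_reducible [NeZero N] {k : ZMod N}
    (hred : IsReducibleE (monoSol N k)) :
    ∃ j, 1 ≤ j ∧ j + 3 ≤ monomialSize N k ∧ (KK k j = 1 ∨ KK k j = -1) := by
  obtain ⟨a, b, ha, hb, hbsol, hequiv⟩ := hred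
  have heq : oplus a b = List.replicate (monomialSize N k) k := by
    rcases hequiv with ⟨i, hi⟩ | ⟨i, hi⟩
    · rw [monoSol, List.rotate_replicate] at hi; exact hi
    · rw [monoSol, List.reverse_replicate, List.rotate_replicate] at hi; exact hi
  have hlen : 1 + ((a.drop 1).dropLast.length + (1 + (b.drop 1).dropLast.length))
      = monomialSize N k := by
    have h' := congrArg List.length heq
    simp only [oplus, List.length_cons, List.length_append, List.length_replicate] at h'
    omega
  have hla : (a.drop 1).dropLast.length = a.length - 2 := by
    simp only [List.length_dropLast, List.length_drop]; omega
  have hlb : (b.drop 1).dropLast.length = b.length - 2 := by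
    simp only [List.length_dropLast, List.length_drop]; omega
  have hmem : ∀ x ∈ oplus a b, x = k := by
    intro x hx
    rw [heq] at hx
    exact (List.mem_replicate.mp hx).2
  have hL2 : ∀ x ∈ (b.drop 1).dropLast, x = k := by
    intro x hx
    apply hmem
    simp only [oplus, List.mem_cons, List.mem_append]
    tauto
  have hL2' : (b.drop 1).dropLast = List.replicate ((b.drop 1).dropLast.length) k :=
    List.eq_replicate_length.mpr hL2
  have hbne : b ≠ [] := by
    intro h; rw [h] at hb; simp at hb
  have htne : b.tail ≠ [] := by
    have h1 : b.tail.length = b.length - 1 := by simp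
    intro h; rw [h] at h1; simp at h1; omega
  have hbrec : b = b.head hbne :: (b.tail.dropLast ++ [b.tail.getLast htne]) := by
    conv_lhs => rw [← List.cons_head_tail hbne]
    rw [List.dropLast_append_getLast htne]
  set j := (b.drop 1).dropLast.length with hj
  have hdt : b.tail.dropLast = List.replicate j k := by
    rw [← List.drop_one]; exact hL2'
  refine ⟨j, by omega, by omega, ?_⟩
  have hbsol' : IsSolutionE (b.head hbne :: (List.replicate j k ++ [b.tail.getLast htne])) := by
    rw [← hdt, ← hbrec]; exact hbsol
  have hMw := Mword_sandwich (b.head hbne) (b.tail.getLast htne) k j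
  rcases hbsol' with hsol | hsol
  · right
    have hP := sandwich_extract (hMw.symm.trans hsol)
    show (genMat k ^ j) 0 0 = -1
    rw [hP]
    simp [Matrix.mul_apply, Fin.sum_univ_two, Matrix.one_apply]
  · left
    have hP := sandwich_extract (hMw.symm.trans hsol)
    show (genMat k ^ j) 0 0 = 1
    rw [hP]
    simp [Matrix.mul_apply, Fin.sum_univ_two, Matrix.one_apply, Matrix.neg_apply]

lemma reducible_of_entry [NeZero N] {k : ZMod N} {j : ℕ}
    (hj1 : 1 ≤ j) (hj3 : j + 3 ≤ monomialSize N k)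
    (hKj : KK k j = 1 ∨ KK k j = -1) :
    IsReducibleE (monoSol N k) := by
  obtain ⟨i, rfl⟩ : ∃ i, j = i + 1 := ⟨j - 1, by omega⟩
  have hdet := KK_det k i
  set n₀ := monomialSize N k with hn0
  set c : ZMod N := KK k i with hc
  set w : ZMod N := KK k (i+1) * c with hw
  have hM : Mword (w :: (List.replicate (i+1) k ++ [w]))
      = genMat w * (!![KK k (i+1), -c; c, KK k (i+1) - k*c] * genMat w) := by
    rw [Mword_sandwich, genMat_pow_succ]
  refine ⟨(k - w) :: (List.replicate (n₀ - (i+1) - 2) k ++ [k - w]),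
          w :: (List.replicate (i+1) k ++ [w]), ?_, ?_, ?_, ?_⟩
  · simp only [List.length_cons, List.length_append, List.length_replicate]; omega
  · simp only [List.length_cons, List.length_append, List.length_replicate]; omega
  · rcases hKj with hη | hη
    · right
      have hcc : c * c = k * c := by rw [hη] at hdet; linear_combination hdet
      have hw1 : w = c := by rw [hw, hη, one_mul]
      rw [hM, hη, hw1]
      show (!![c, -1; 1, 0] : Matrix (Fin 2) (Fin 2) (ZMod N)) * (_ * !![c, -1; 1, 0]) = -1
      rw [Matrix.mul_fin_two, Matrix.mul_fin_two]
      rw [show (-1 : Matrix (Fin 2) (Fin 2) (ZMod N)) = !![-1, 0; 0, -1] from neg_one_fin_two]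
      ext i' j'
      fin_cases i' <;> fin_cases j' <;>
        simp <;>
        first
          | linear_combination hcc
          | linear_combination -hcc
    · left
      have hcc : c * c = -(k * c) := by rw [hη] at hdet; linear_combination hdet
      have hw1 : w = -c := by rw [hw, hη]; ring
      rw [hM, hη, hw1]
      show (!![-c, -1; 1, 0] : Matrix (Fin 2) (Fin 2) (ZMod N)) * (_ * !![-c, -1; 1, 0]) = 1
      rw [Matrix.mul_fin_two, Matrix.mul_fin_two, Matrix.one_fin_two]
      ext i' j'
      fin_cases i' <;> fin_cases j' <;>
        simp <;>
        first
          | linear_combination hcc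
          | linear_combination -hcc
  · left
    refine ⟨0, ?_⟩
    rw [List.rotate_zero, monoSol]
    have h2 : (w :: (List.replicate (i+1) k ++ [w])).getLastD 0 = w := by
      rw [← List.cons_append, List.getLastD_concat]
    have h3 : ((k - w) :: (List.replicate (n₀ - (i+1) - 2) k ++ [k - w])).getLastD 0 = k - w := by
      rw [← List.cons_append, List.getLastD_concat]
    rw [oplus, h2, h3]
    simp only [List.headD_cons, List.drop_one, List.tail_cons, List.dropLast_concat]
    have hk1 : k - w + w = k := by ring
    rw [hk1]
    apply List.eq_replicate_iff.mpr
    constructor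
    · simp only [List.length_cons, List.length_append, List.length_replicate]; omega
    · intro x hx
      simp only [List.mem_cons, List.mem_append, List.mem_replicate] at hx
      rcases hx with h | h | h
      · exact h
      · exact h.2
      · rcases h with h | h
        · exact h
        · exact h.2

end Criterion

section Iff
variable {N : ℕ}

lemma irred_iff (hN : 2 ≤ N) {k : ZMod N} (hk : IsUnit k) :
    IsIrreducibleE (monoSol N k) ↔
    ∀ j, 1 ≤ j → j + 3 ≤ monomialSize N k → ¬(KK k j = 1 ∨ KK k j = -1) := by
  haveI : NeZero N := ⟨by omega⟩
  constructor
  · rintro ⟨_, _, hnred⟩ j hj1 hj3 hKj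
    exact hnred (reducible_of_entry hj1 hj3 hKj)
  · intro h
    refine ⟨(mSize_mem k).2, ?_, ?_⟩
    · rw [monoSol, List.length_replicate]
      exact three_le_mSize hN hk
    · intro hred
      obtain ⟨j, hj1, hj3, hKj⟩ := entry_of_reducible hred
      exact h j hj1 hj3 hKj

end Iff

section NT

lemma cast_zero_iff_dvd_val {N m : ℕ} [NeZero N] (h : m ∣ N) (x : ZMod N) :
    ZMod.castHom h (ZMod m) x = 0 ↔ m ∣ x.val := by
  conv_lhs => rw [← ZMod.natCast_zmod_val x]
  rw [map_natCast]
  exact ZMod.natCast_eq_zero_iff _ _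

lemma crt_zero {N A B : ℕ} [NeZero N] (hN : N = A * B) (hco : Nat.Coprime A B)
    (x : ZMod N)
    (hA : ZMod.castHom ⟨B, hN⟩ (ZMod A) x = 0)
    (hB : ZMod.castHom ⟨A, by rw [hN, mul_comm]⟩ (ZMod B) x = 0) : x = 0 := by
  rw [cast_zero_iff_dvd_val] at hA hB
  have hNdvd : N ∣ x.val := by
    have h2 : A * B ∣ x.val := Nat.Coprime.mul_dvd_of_dvd_of_dvd hco hA hB
    rwa [← hN] at h2
  have := (ZMod.natCast_eq_zero_iff x.val N).mpr hNdvd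
  rwa [ZMod.natCast_zmod_val x] at this

lemma local_dichotomy {p e : ℕ} (hp : p.Prime) (he : 1 ≤ e)
    {c d : ZMod (p ^ e)} (h0 : c * d = 0) (hu : IsUnit (c + d)) :
    c = 0 ∨ d = 0 := by
  haveI : NeZero (p ^ e) := ⟨pow_ne_zero e hp.ne_zero⟩
  haveI : Fact p.Prime := ⟨hp⟩
  have hpdvd : p ∣ p ^ e := dvd_pow_self p (by omega)
  set φ := ZMod.castHom hpdvd (ZMod p) with hφ
  have key : ∀ c' d' : ZMod (p ^ e), c' * d' = 0 → φ c' ≠ 0 → d' = 0 := by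
    intro c' d' h0' hc'
    have hval : ¬ p ∣ c'.val := by
      rw [← cast_zero_iff_dvd_val hpdvd] at *
      exact hc'
    have hcop : Nat.Coprime c'.val (p ^ e) :=
      Nat.Coprime.pow_right e ((Nat.Prime.coprime_iff_not_dvd hp).mpr hval).symm
    have hcu : IsUnit c' := by
      rw [← ZMod.natCast_zmod_val c']
      exact (ZMod.isUnit_iff_coprime _ _).mpr hcop
    exact (IsUnit.mul_right_eq_zero hcu).mp h0'
  by_cases hc : φ c = 0
  · by_cases hd : φ d = 0
    · exfalso
      have : φ (c + d) = 0 := by rw [map_add, hc, hd, add_zero]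
      have hunit : IsUnit (φ (c + d)) := hu.map φ
      rw [this] at hunit
      exact not_isUnit_zero hunit
    · left
      have := key d c (by rwa [mul_comm]) hd
      exact this
  · right
    exact key c d h0 hc

lemma genMat_map {N m : ℕ} (f : ZMod N →+* ZMod m) (a : ZMod N) :
    (RingHom.mapMatrix f) (genMat a) = genMat (f a) := by
  ext i j
  fin_cases i <;> fin_cases j <;>
    simp [genMat, RingHom.mapMatrix_apply, Matrix.map_apply]

lemma genMat_one_cube {m : ℕ} : (genMat (1 : ZMod m)) ^ 3 = -1 := by
  rw [pow_succ, pow_succ, pow_one]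
  show (!![(1:ZMod m), -1; 1, 0] * !![(1:ZMod m), -1; 1, 0]) * !![(1:ZMod m), -1; 1, 0] = -1
  rw [Matrix.mul_fin_two, Matrix.mul_fin_two, neg_one_fin_two]
  congr 1 <;> norm_num

lemma three_dvd_of_pm_one {m : ℕ} (hm : 2 ≤ m) {y : ZMod m} (hy : y ≠ 0)
    (hcube : genMat y ^ 3 = 1 ∨ genMat y ^ 3 = -1) (r : ℕ)
    (h : genMat y ^ r = 1 ∨ genMat y ^ r = -1) : 3 ∣ r := by
  haveI : NeZero m := ⟨by omega⟩
  haveI : Fact (1 < m) := ⟨by omega⟩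
  have hdecomp : genMat y ^ r = (genMat y ^ 3) ^ (r / 3) * genMat y ^ (r % 3) := by
    rw [← pow_mul, ← pow_add]
    congr 1
    omega
  have hs : genMat y ^ (r % 3) = 1 ∨ genMat y ^ (r % 3) = -1 := by
    have hsign : (genMat y ^ 3) ^ (r / 3) = 1 ∨ (genMat y ^ 3) ^ (r / 3) = -1 := by
      rcases hcube with hc | hc <;> rw [hc]
      · left; exact one_pow _
      · rcases Nat.even_or_odd (r / 3) with he | ho
        · left; exact he.neg_one_pow
        · right; exact ho.neg_one_pow
    rcases hsign with h1 | h1 <;> rcases h with h2 | h2 <;>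
      rw [hdecomp, h1] at h2
    · left; rwa [one_mul] at h2
    · right; rwa [one_mul] at h2
    · right
      have := congrArg (fun X => (-1 : Matrix (Fin 2) (Fin 2) (ZMod m)) * X) h2
      simp only [← mul_assoc, neg_one_mul, neg_neg, one_mul] at this
      rw [this]
    · left
      have := congrArg (fun X => (-1 : Matrix (Fin 2) (Fin 2) (ZMod m)) * X) h2
      simp only [← mul_assoc, neg_one_mul, neg_neg, one_mul] at this
      rw [this]
  have hr3 : r % 3 = 0 ∨ r % 3 = 1 ∨ r % 3 = 2 := by omega
  rcases hr3 with h0 | h1 | h2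
  · omega
  · exfalso
    rw [h1, pow_one] at hs
    rcases hs with h' | h'
    · have := congrFun (congrFun h' 1) 0
      simp [genMat, Matrix.one_apply] at this
    · have := congrFun (congrFun h' 1) 0
      simp [genMat, Matrix.one_apply, Matrix.neg_apply] at this
  · exfalso
    rw [h2] at hs
    have hsq : genMat y ^ 2 = genMat y * genMat y := sq (genMat y)
    have hent : (genMat y ^ 2) 1 0 = y := by
      rw [hsq]
      show ((!![y, -1; 1, 0] : Matrix (Fin 2) (Fin 2) (ZMod m)) * !![y, -1; 1, 0]) 1 0 = y
      rw [Matrix.mul_fin_two]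
      simp
    rcases hs with h' | h'
    · rw [h'] at hent
      simp [Matrix.one_apply] at hent
      exact hy hent.symm
    · rw [h'] at hent
      rw [neg_one_fin_two] at hent
      simp at hent
      exact hy hent.symm

end NT

section Backward

lemma pow_pm_of_c_zero {N : ℕ} {k : ZMod N} {i : ℕ}
    (hη : KK k (i+1) = 1 ∨ KK k (i+1) = -1) (hc : KK k i = 0) :
    genMat k ^ (i+1) = 1 ∨ genMat k ^ (i+1) = -1 := by
  rw [genMat_pow_succ, hc]
  rcases hη with h | h <;> rw [h]
  · left
    rw [Matrix.one_fin_two]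
    congr 1 <;> norm_num
  · right
    rw [neg_one_fin_two]
    congr 1 <;> norm_num

lemma pow_pm_of_d_zero {N : ℕ} {k : ZMod N} {i : ℕ}
    (hη : KK k (i+1) = 1 ∨ KK k (i+1) = -1) (hd : KK k (i+2) = 0) :
    genMat k ^ (i+3) = 1 ∨ genMat k ^ (i+3) = -1 := by
  have h3 : KK k (i+3) = -KK k (i+1) := by
    have := KK_rec k (i+1)
    rw [show i+1+2 = i+3 from rfl, show i+1+1 = i+2 from rfl, hd] at this
    rw [this]; ring
  rw [show i+3 = (i+2)+1 from rfl, genMat_pow_succ, hd,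
    show (i+2)+1 = i+3 from rfl, h3]
  rcases hη with h | h <;> rw [h]
  · right
    rw [neg_one_fin_two]
    congr 1 <;> norm_num
  · left
    rw [Matrix.one_fin_two]
    congr 1 <;> norm_num

lemma three_dvd_side {N m : ℕ} [NeZero N] (hm2 : 2 ≤ m) (hdvd : m ∣ N) {k : ZMod N}
    (hk : IsUnit k)
    (hcube : ∀ y : ZMod m, y ≠ 0 → (genMat y ^ 3 = 1 ∨ genMat y ^ 3 = -1))
    (i' : ℕ) (hc : ZMod.castHom hdvd (ZMod m) (KK k i') = 0)
    (hη : ZMod.castHom hdvd (ZMod m) (KK k (i'+1)) = 1 ∨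
          ZMod.castHom hdvd (ZMod m) (KK k (i'+1)) = -1) :
    3 ∣ (i' + 1) := by
  haveI : Fact (1 < m) := ⟨by omega⟩
  set χ := ZMod.castHom hdvd (ZMod m) with hχ
  have hyne : χ k ≠ 0 := (hk.map χ).ne_zero
  have hmap : genMat (χ k) ^ (i'+1) = (RingHom.mapMatrix χ) (genMat k ^ (i'+1)) := by
    rw [map_pow, genMat_map]
  have hform : (RingHom.mapMatrix χ) (genMat k ^ (i'+1)) =
      !![χ (KK k (i'+1)), 0; 0, χ (KK k (i'+1))] := by
    rw [genMat_pow_succ]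
    ext a b
    fin_cases a <;> fin_cases b <;>
      simp [RingHom.mapMatrix_apply, Matrix.map_apply, _root_.map_sub, _root_.map_mul, _root_.map_neg, hc]
  have hpm : genMat (χ k) ^ (i'+1) = 1 ∨ genMat (χ k) ^ (i'+1) = -1 := by
    rw [hmap, hform]
    rcases hη with h | h <;> rw [h]
    · left; rw [Matrix.one_fin_two]
    · right; rw [neg_one_fin_two]
  exact three_dvd_of_pm_one hm2 hyne (hcube _ hyne) (i'+1) hpm

lemma good_prime_pow (p e : ℕ) (hp : p.Prime) (he : 1 ≤ e)
    {k : ZMod (p ^ e)} (hk : IsUnit k) : IsIrreducibleE (monoSol (p ^ e) k) := by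
  have hN2 : 2 ≤ p ^ e := by
    calc 2 ≤ p := hp.two_le
    _ = p ^ 1 := (pow_one p).symm
    _ ≤ p ^ e := Nat.pow_le_pow_right hp.pos he
  haveI : NeZero (p ^ e) := ⟨by omega⟩
  rw [irred_iff hN2 hk]
  intro j hj1 hj3 hKj
  obtain ⟨i, rfl⟩ : ∃ i, j = i + 1 := ⟨j - 1, by omega⟩
  have hdet := KK_det k i
  have hrec := KK_rec k i
  have hcd : KK k i * KK k (i+2) = 0 := by
    rcases hKj with h | h <;> rw [hrec, h] <;> rw [h] at hdet <;> linear_combination -hdet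
  have hsum : IsUnit (KK k i + KK k (i+2)) := by
    rcases hKj with h | h <;> rw [hrec, h]
    · have : KK k i + (k * 1 - KK k i) = k := by ring
      rw [this]; exact hk
    · have : KK k i + (k * -1 - KK k i) = -k := by ring
      rw [this]; exact hk.neg
  rcases local_dichotomy hp he hcd hsum with h0 | h0
  · exact not_small k (i+1) (by omega) (by omega) (pow_pm_of_c_zero hKj h0)
  · exact not_small k (i+3) (by omega) (by omega) (pow_pm_of_d_zero hKj h0)

lemma good_two_three (a b N : ℕ) (ha : 1 ≤ a) (hb : 1 ≤ b)
    (hNdef : N = 2 ^ a * 3 ^ b)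
    {k : ZMod N} (hk : IsUnit k) :
    IsIrreducibleE (monoSol N k) := by
  have h2a : 2 ≤ 2 ^ a := by
    calc 2 = 2 ^ 1 := (pow_one 2).symm
    _ ≤ 2 ^ a := Nat.pow_le_pow_right (by norm_num) ha
  have h3b : 3 ≤ 3 ^ b := by
    calc 3 = 3 ^ 1 := (pow_one 3).symm
    _ ≤ 3 ^ b := Nat.pow_le_pow_right (by norm_num) hb
  have hN2 : 2 ≤ N := by
    rw [hNdef]
    calc 2 ≤ 2 ^ a * 1 := by omega
    _ ≤ 2 ^ a * 3 ^ b := Nat.mul_le_mul_left _ (by omega)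
  haveI : NeZero N := ⟨by omega⟩
  have hco : Nat.Coprime (2 ^ a) (3 ^ b) := Nat.Coprime.pow a b (by norm_num)
  have hdvdA : (2 : ℕ) ^ a ∣ N := ⟨3 ^ b, hNdef⟩
  have hdvdB : (3 : ℕ) ^ b ∣ N := ⟨2 ^ a, by rw [hNdef, mul_comm]⟩
  have hdvd2 : (2 : ℕ) ∣ N := dvd_trans (dvd_pow_self 2 (by omega)) hdvdA
  have hdvd3 : (3 : ℕ) ∣ N := dvd_trans (dvd_pow_self 3 (by omega)) hdvdB
  rw [irred_iff hN2 hk]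
  intro j hj1 hj3 hKj
  obtain ⟨i, rfl⟩ : ∃ i, j = i + 1 := ⟨j - 1, by omega⟩
  have hdet := KK_det k i
  have hrec : KK k (i+2) = k * KK k (i+1) - KK k i := KK_rec k i
  have hcd : KK k i * KK k (i+2) = 0 := by
    rcases hKj with h | h <;> rw [hrec, h] <;> rw [h] at hdet <;> linear_combination -hdet
  have hsum : IsUnit (KK k i + KK k (i+2)) := by
    rcases hKj with h | h <;> rw [hrec, h]
    · have he : KK k i + (k * 1 - KK k i) = k := by ring
      rw [he]; exact hk
    · have he : KK k i + (k * -1 - KK k i) = -k := by ring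
      rw [he]; exact hk.neg
  have hdichA : ZMod.castHom hdvdA (ZMod (2 ^ a)) (KK k i) = 0 ∨
      ZMod.castHom hdvdA (ZMod (2 ^ a)) (KK k (i+2)) = 0 := by
    apply local_dichotomy Nat.prime_two ha
    · rw [← _root_.map_mul, hcd, map_zero]
    · rw [← _root_.map_add]; exact hsum.map _
  have hdichB : ZMod.castHom hdvdB (ZMod (3 ^ b)) (KK k i) = 0 ∨
      ZMod.castHom hdvdB (ZMod (3 ^ b)) (KK k (i+2)) = 0 := by
    apply local_dichotomy Nat.prime_three hb
    · rw [← _root_.map_mul, hcd, map_zero]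
    · rw [← _root_.map_add]; exact hsum.map _
  have hcube2 : ∀ y : ZMod 2, y ≠ 0 → (genMat y ^ 3 = 1 ∨ genMat y ^ 3 = -1) := by decide
  have hcube3 : ∀ y : ZMod 3, y ≠ 0 → (genMat y ^ 3 = 1 ∨ genMat y ^ 3 = -1) := by decide
  have hχ2 : ∀ x : ZMod N, ZMod.castHom hdvdA (ZMod (2 ^ a)) x = 0 →
      ZMod.castHom hdvd2 (ZMod 2) x = 0 := by
    intro x hx
    rw [cast_zero_iff_dvd_val] at hx ⊢
    exact dvd_trans (dvd_pow_self 2 (by omega)) hx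
  have hχ3 : ∀ x : ZMod N, ZMod.castHom hdvdB (ZMod (3 ^ b)) x = 0 →
      ZMod.castHom hdvd3 (ZMod 3) x = 0 := by
    intro x hx
    rw [cast_zero_iff_dvd_val] at hx ⊢
    exact dvd_trans (dvd_pow_self 3 (by omega)) hx
  have hη2 : ZMod.castHom hdvd2 (ZMod 2) (KK k (i+1)) = 1 ∨
      ZMod.castHom hdvd2 (ZMod 2) (KK k (i+1)) = -1 := by
    rcases hKj with h | h <;> rw [h]
    · left; exact _root_.map_one _
    · right; rw [_root_.map_neg, _root_.map_one]
  have hη3 : ZMod.castHom hdvd3 (ZMod 3) (KK k (i+1)) = 1 ∨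
      ZMod.castHom hdvd3 (ZMod 3) (KK k (i+1)) = -1 := by
    rcases hKj with h | h <;> rw [h]
    · left; exact _root_.map_one _
    · right; rw [_root_.map_neg, _root_.map_one]
  have hrec2 : KK k (i+3) = k * KK k (i+2) - KK k (i+1) := KK_rec k (i+1)
  have hηd : ∀ (m : ℕ) (hm : m ∣ N), ZMod.castHom hm (ZMod m) (KK k (i+2)) = 0 →
      (ZMod.castHom hm (ZMod m) (KK k (i+3)) = 1 ∨
       ZMod.castHom hm (ZMod m) (KK k (i+3)) = -1) := by
    intro m hm hd0
    rw [hrec2, _root_.map_sub, _root_.map_mul, hd0, mul_zero, zero_sub]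
    rcases hKj with h | h <;> rw [h]
    · right; rw [_root_.map_one]
    · left; rw [_root_.map_neg, _root_.map_one, neg_neg]
  rcases hdichA with hA0 | hA0 <;> rcases hdichB with hB0 | hB0
  · have hc0 : KK k i = 0 := crt_zero hNdef hco _ hA0 hB0
    exact not_small k (i+1) (by omega) (by omega) (pow_pm_of_c_zero hKj hc0)
  · have h1 : 3 ∣ (i+1) := three_dvd_side (by norm_num) hdvd2 hk hcube2 i (hχ2 _ hA0) hη2
    have h2 : 3 ∣ (i+3) := by
      have h' := three_dvd_side (m := 3) (by norm_num) hdvd3 hk hcube3 (i+2)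
        (hχ3 _ hB0) (hηd 3 hdvd3 (hχ3 _ hB0))
      simpa using h'
    omega
  · have h1 : 3 ∣ (i+1) := three_dvd_side (by norm_num) hdvd3 hk hcube3 i (hχ3 _ hB0) hη3
    have h2 : 3 ∣ (i+3) := by
      have h' := three_dvd_side (m := 2) (by norm_num) hdvd2 hk hcube2 (i+2)
        (hχ2 _ hA0) (hηd 2 hdvd2 (hχ2 _ hA0))
      simpa using h'
    omega
  · have hd0 : KK k (i+2) = 0 := crt_zero hNdef hco _ hA0 hB0
    exact not_small k (i+3) (by omega) (by omega) (pow_pm_of_d_zero hKj hd0)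

end Backward

section Forward

lemma genMat_two_pow {m : ℕ} (r : ℕ) :
    genMat (2 : ZMod m) ^ r =
      !![(r : ZMod m) + 1, -(r : ZMod m); (r : ZMod m), 1 - (r : ZMod m)] := by
  induction r with
  | zero =>
    rw [pow_zero, Matrix.one_fin_two]
    norm_num
  | succ n ih =>
    rw [pow_succ, ih]
    show _ * (!![(2 : ZMod m), -1; 1, 0]) = _
    rw [Matrix.mul_fin_two]
    ext a b
    fin_cases a <;> fin_cases b <;> simp <;> push_cast <;> ring

lemma genMat_one_pow_odd {m : ℕ} (t : ℕ) :
    genMat (1 : ZMod m) ^ (6 * t + 3) = -1 := by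
  have h1 : 6 * t + 3 = 3 * (2 * t + 1) := by ring
  rw [h1, pow_mul, genMat_one_cube]
  exact Odd.neg_one_pow ⟨t, by ring⟩

lemma genMat_one_pow_mul3 {m : ℕ} (u : ℕ) :
    genMat (1 : ZMod m) ^ (3 * u) = (-1) ^ u := by
  rw [pow_mul, genMat_one_cube]

lemma cast_two_eq_zero_iff {m : ℕ} [NeZero m] : ((2 : ZMod m) = 0) ↔ m ∣ 2 := by
  have : ((2 : ℕ) : ZMod m) = (2 : ZMod m) := by push_cast; ring
  rw [← this]
  exact ZMod.natCast_eq_zero_iff 2 m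

lemma not_qmi (N p e A : ℕ) (hp : p.Prime) (hp5 : 5 ≤ p) (he : 1 ≤ e)
    (hA2 : 2 ≤ A) (hNdef : N = A * p ^ e) (hco : Nat.Coprime A (p ^ e)) :
    ¬ QuasiMonomiallyIrreducible N := by
  intro hqmi
  set B := p ^ e with hBdef
  have hB5 : 5 ≤ B := le_trans hp5 (Nat.le_self_pow (by omega) p)
  have hN2 : 2 ≤ N := by
    rw [hNdef]
    calc 2 ≤ A * 1 := by omega
    _ ≤ A * B := Nat.mul_le_mul_left _ (by omega)
  haveI : NeZero N := ⟨by omega⟩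
  -- coprimality of 2, 3, 6 with B
  have hcop_prime : ∀ q : ℕ, q.Prime → q ≠ p → Nat.Coprime q B := by
    intro q hq hqp
    refine (Nat.Prime.coprime_iff_not_dvd hq).mpr ?_
    intro hdvd
    exact hqp ((Nat.prime_dvd_prime_iff_eq hq hp).mp (hq.dvd_of_dvd_pow hdvd))
  have hcop2B : Nat.Coprime 2 B := hcop_prime 2 Nat.prime_two (by omega)
  have hcop3B : Nat.Coprime 3 B := hcop_prime 3 Nat.prime_three (by omega)
  have hcop6B : Nat.Coprime 6 B := by
    have h6 : (6 : ℕ) = 2 * 3 := by norm_num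
    rw [h6]
    exact Nat.Coprime.mul hcop2B hcop3B
  -- the residue k
  obtain ⟨κ, hκA, hκB⟩ := Nat.chineseRemainder hco 1 2
  have hcopκ : Nat.Coprime κ N := by
    rw [hNdef]
    apply Nat.Coprime.mul_right
    · have h1 : κ % A = 1 % A := hκA
      have h2 : (1 : ℕ) % A = 1 := Nat.mod_eq_of_lt (by omega)
      have h3 : Nat.gcd A κ = Nat.gcd 1 A := by
        rw [Nat.gcd_rec A κ, h1, h2]
      rw [Nat.coprime_comm]
      unfold Nat.Coprime
      rw [h3]
      exact Nat.gcd_one_left A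
    · have h1 : κ % B = 2 % B := hκB
      have h2 : (2 : ℕ) % B = 2 := Nat.mod_eq_of_lt (by omega)
      have h3 : Nat.gcd B κ = Nat.gcd 2 B := by
        rw [Nat.gcd_rec B κ, h1, h2]
      rw [Nat.coprime_comm]
      unfold Nat.Coprime
      rw [h3]
      exact hcop2B
  set k : ZMod N := ((κ : ℕ) : ZMod N) with hkdef
  have hk : IsUnit k := (ZMod.isUnit_iff_coprime κ N).mpr hcopκ
  -- apply QMI
  have hirr : IsIrreducibleE (monoSol N k) := by
    have hgcd : Int.gcd (κ : ℤ) (N : ℤ) = 1 := by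
      rw [Int.gcd_natCast_natCast]
      exact hcopκ
    have := hqmi (κ : ℤ) hgcd
    rwa [Int.cast_natCast] at this
  rw [irred_iff hN2 hk] at hirr
  -- homs
  have hdvdA : A ∣ N := ⟨B, hNdef⟩
  have hdvdB : B ∣ N := ⟨A, by rw [hNdef, mul_comm]⟩
  set ψA := ZMod.castHom hdvdA (ZMod A) with hψA
  set ψB := ZMod.castHom hdvdB (ZMod B) with hψB
  have hkA : ψA k = 1 := by
    rw [hkdef, map_natCast]
    have := (ZMod.natCast_eq_natCast_iff κ 1 A).mpr hκA
    rwa [Nat.cast_one] at this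
  have hkB : ψB k = 2 := by
    rw [hkdef, map_natCast]
    have := (ZMod.natCast_eq_natCast_iff κ 2 B).mpr hκB
    rwa [Nat.cast_two] at this
  have hmapA : ∀ r : ℕ, (RingHom.mapMatrix ψA) (genMat k ^ r) = genMat (1 : ZMod A) ^ r := by
    intro r
    rw [map_pow, genMat_map, hkA]
  have hmapB : ∀ r : ℕ, (RingHom.mapMatrix ψB) (genMat k ^ r) = genMat (2 : ZMod B) ^ r := by
    intro r
    rw [map_pow, genMat_map, hkB]
  have hKKA : ∀ r : ℕ, ψA (KK k r) = (genMat (1 : ZMod A) ^ r) 0 0 := by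
    intro r
    rw [← hmapA r]
    rfl
  have hKKB : ∀ r : ℕ, ψB (KK k r) = (genMat (2 : ZMod B) ^ r) 0 0 := by
    intro r
    rw [← hmapB r]
    rfl
  set n₀ := monomialSize N k with hn₀
  haveI : NeZero B := ⟨by omega⟩
  haveI : NeZero A := ⟨by omega⟩
  -- the power n₀ is = 1, B ∣ n₀, 3 ∣ n₀
  have hsol : genMat k ^ n₀ = 1 := by
    rcases mSize_sol k with h | h
    · exact h
    · exfalso
      have hmap := congrArg (RingHom.mapMatrix ψB) h
      rw [hmapB, _root_.map_neg, _root_.map_one, genMat_two_pow] at hmap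
      have h10 := congrFun (congrFun hmap 1) 0
      have h00 := congrFun (congrFun hmap 0) 0
      rw [neg_one_fin_two] at h10 h00
      simp at h10 h00
      rw [h10] at h00
      have h2z : (2 : ZMod B) = 0 := by
        first | linear_combination h00 | linear_combination -h00
      rw [cast_two_eq_zero_iff] at h2z
      have := Nat.le_of_dvd (by norm_num) h2z
      omega
  have hBn : B ∣ n₀ := by
    have hmap := congrArg (RingHom.mapMatrix ψB) hsol
    rw [hmapB, _root_.map_one, genMat_two_pow] at hmap
    have h10 := congrFun (congrFun hmap 1) 0
    rw [Matrix.one_fin_two] at h10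
    simp at h10
    exact (ZMod.natCast_eq_zero_iff n₀ B).mp h10
  have hAsol : genMat (1 : ZMod A) ^ n₀ = 1 := by
    have hmap := congrArg (RingHom.mapMatrix ψA) hsol
    rwa [hmapA, _root_.map_one] at hmap
  have h3n : 3 ∣ n₀ :=
    three_dvd_of_pm_one hA2 (zmod_one_ne_zero hA2) (Or.inr genMat_one_cube) n₀ (Or.inl hAsol)
  have hn₀pos : 0 < n₀ := (mSize_mem k).1
  -- now split on A = 2 or A > 2
  rcases Nat.lt_or_ge 2 A with hA | hA
  · -- A > 2 : n₀ is a multiple of 6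
    have h6n : 6 ∣ n₀ := by
      obtain ⟨u, hu⟩ := h3n
      rw [hu, genMat_one_pow_mul3] at hAsol
      rcases Nat.even_or_odd u with heu | hou
      · obtain ⟨v, hv⟩ := heu
        exact ⟨v, by omega⟩
      · exfalso
        rw [hou.neg_one_pow] at hAsol
        have h00 := congrFun (congrFun hAsol 0) 0
        rw [neg_one_fin_two, Matrix.one_fin_two] at h00
        simp at h00
        have h2z : (2 : ZMod A) = 0 := by
          first | linear_combination h00 | linear_combination -h00
        rw [cast_two_eq_zero_iff] at h2z
        have := Nat.le_of_dvd (by norm_num) h2z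
        omega
    have h6Bn : 6 * B ∣ n₀ := Nat.Coprime.mul_dvd_of_dvd_of_dvd hcop6B h6n hBn
    have hn6B : 6 * B ≤ n₀ := Nat.le_of_dvd hn₀pos h6Bn
    -- choose j
    obtain ⟨j', hj'6, hj'B⟩ := Nat.chineseRemainder hcop6B 3 (B - 2)
    set j := j' % (6 * B) with hj
    have hj6 : j % 6 = 3 := by
      rw [hj, Nat.mod_mod_of_dvd j' ⟨B, rfl⟩]
      have : j' % 6 = 3 % 6 := hj'6
      omega
    have hjB : j % B = B - 2 := by
      rw [hj, Nat.mod_mod_of_dvd j' ⟨6, by ring⟩]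
      have : j' % B = (B - 2) % B := hj'B
      rw [this]
      exact Nat.mod_eq_of_lt (by omega)
    have hjlt : j < 6 * B := Nat.mod_lt _ (by omega)
    have hj1 : 1 ≤ j := by omega
    have hjle : j + 3 ≤ n₀ := by
      have h6dvd : (6 : ℕ) ∣ 6 * B := ⟨B, rfl⟩
      obtain ⟨w, hw⟩ := h6dvd
      omega
    -- KK k j = -1
    have hKK : KK k j = -1 := by
      have hx : KK k j + 1 = 0 := by
        apply crt_zero hNdef hco
        · rw [_root_.map_add, _root_.map_one, hKKA j]
          obtain ⟨t, ht⟩ : ∃ t, j = 6 * t + 3 := ⟨j / 6, by omega⟩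
          rw [ht, genMat_one_pow_odd, neg_one_fin_two]
          simp
        · rw [_root_.map_add, _root_.map_one, hKKB j]
          rw [genMat_two_pow]
          have hcast : (j : ZMod B) = -2 := by
            have h1 : ((j % B : ℕ) : ZMod B) = (j : ZMod B) := by
              rw [ZMod.natCast_eq_natCast_iff]
              exact (Nat.mod_modEq j B)
            rw [← h1, hjB]
            have h2 : ((B - 2 : ℕ) : ZMod B) = (B : ZMod B) - 2 := by
              have : ((B - 2) + 2 : ℕ) = B := by omega
              have h3 := congrArg (fun x : ℕ => (x : ZMod B)) this
              push_cast at h3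
              linear_combination h3
            rw [h2, ZMod.natCast_self]
            ring
          simp [hcast]
          ring
      linear_combination hx
    exact hirr j hj1 (by omega) (Or.inr hKK)
  · -- A = 2
    have hA2' : A = 2 := by omega
    have h3Bn : 3 * B ∣ n₀ := Nat.Coprime.mul_dvd_of_dvd_of_dvd hcop3B h3n hBn
    have hn3B : 3 * B ≤ n₀ := Nat.le_of_dvd hn₀pos h3Bn
    obtain ⟨j', hj'3, hj'B⟩ := Nat.chineseRemainder hcop3B 0 (B - 2)
    set j := j' % (3 * B) with hj
    have hj3 : j % 3 = 0 := by
      rw [hj, Nat.mod_mod_of_dvd j' ⟨B, rfl⟩]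
      have : j' % 3 = 0 % 3 := hj'3
      omega
    have hjB : j % B = B - 2 := by
      rw [hj, Nat.mod_mod_of_dvd j' ⟨3, by ring⟩]
      have : j' % B = (B - 2) % B := hj'B
      rw [this]
      exact Nat.mod_eq_of_lt (by omega)
    have hjlt : j < 3 * B := Nat.mod_lt _ (by omega)
    have hj1 : 1 ≤ j := by
      rcases Nat.eq_zero_or_pos j with h0 | h0
      · rw [h0] at hjB
        simp at hjB
        omega
      · omega
    have hjle : j + 3 ≤ n₀ := by omega
    have hKK : KK k j = -1 := by
      have hx : KK k j + 1 = 0 := by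
        apply crt_zero hNdef hco
        · rw [_root_.map_add, _root_.map_one, hKKA j]
          obtain ⟨u, hu⟩ : ∃ u, j = 3 * u := ⟨j / 3, by omega⟩
          rw [hu, genMat_one_pow_mul3]
          -- in ZMod 2 : (-1)^u entry + 1 = 0
          rcases Nat.even_or_odd u with heu | hou
          · rw [heu.neg_one_pow]
            rw [Matrix.one_fin_two]
            subst hA2'
            simp
            decide
          · rw [hou.neg_one_pow, neg_one_fin_two]
            simp
        · rw [_root_.map_add, _root_.map_one, hKKB j]
          rw [genMat_two_pow]
          have hcast : (j : ZMod B) = -2 := by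
            have h1 : ((j % B : ℕ) : ZMod B) = (j : ZMod B) := by
              rw [ZMod.natCast_eq_natCast_iff]
              exact (Nat.mod_modEq j B)
            rw [← h1, hjB]
            have h2 : ((B - 2 : ℕ) : ZMod B) = (B : ZMod B) - 2 := by
              have : ((B - 2) + 2 : ℕ) = B := by omega
              have h3 := congrArg (fun x : ℕ => (x : ZMod B)) this
              push_cast at h3
              linear_combination h3
            rw [h2, ZMod.natCast_self]
            ring
          simp [hcast]
          ring
      linear_combination hx
    exact hirr j hj1 (by omega) (Or.inr hKK)

end Forward

section Final

lemma isUnit_of_gcd_one {N : ℕ} [NeZero N] {k : ℤ} (h : Int.gcd k (N : ℤ) = 1) :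
    IsUnit ((k : ZMod N)) := by
  have hco : IsCoprime k (N : ℤ) := Int.isCoprime_iff_gcd_eq_one.mpr h
  obtain ⟨a, b, hab⟩ := hco
  have hcast := congrArg (fun x : ℤ => (x : ZMod N)) hab
  push_cast at hcast
  rw [ZMod.natCast_self, mul_zero, add_zero] at hcast
  exact IsUnit.of_mul_eq_one _ (by rw [mul_comm] at hcast; exact hcast)

lemma exists_decomp (N : ℕ) (hN : 2 ≤ N)
    (h : ¬((∃ p n : ℕ, p.Prime ∧ 1 ≤ n ∧ N = p ^ n) ∨
        (∃ n m : ℕ, 1 ≤ n ∧ 1 ≤ m ∧ N = 2 ^ n * 3 ^ m))) :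
    ∃ p e A : ℕ, p.Prime ∧ 5 ≤ p ∧ 1 ≤ e ∧ 2 ≤ A ∧ N = A * p ^ e ∧
      Nat.Coprime A (p ^ e) := by
  push_neg at h
  obtain ⟨h1, h2⟩ := h
  have hN0 : N ≠ 0 := by omega
  obtain ⟨C, hC⟩ : ∃ C, C = N / 2 ^ N.factorization 2 := ⟨_, rfl⟩
  have hC0 : C ≠ 0 := by
    rw [hC]; exact Nat.pos_iff_ne_zero.mp (Nat.ordCompl_pos 2 hN0)
  have hNC : 2 ^ N.factorization 2 * C = N := by
    rw [hC]; exact Nat.ordProj_mul_ordCompl_eq_self N 2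
  have hn2C : ¬ (2 : ℕ) ∣ C := by
    rw [hC]; exact Nat.not_dvd_ordCompl Nat.prime_two hN0
  have hCN : C ∣ N := by
    rw [hC]; exact Nat.div_dvd_of_dvd (Nat.ordProj_dvd N 2)
  obtain ⟨D, hD⟩ : ∃ D, D = C / 3 ^ C.factorization 3 := ⟨_, rfl⟩
  have hD0 : D ≠ 0 := by
    rw [hD]; exact Nat.pos_iff_ne_zero.mp (Nat.ordCompl_pos 3 hC0)
  have hCD : 3 ^ C.factorization 3 * D = C := by
    rw [hD]; exact Nat.ordProj_mul_ordCompl_eq_self C 3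
  have hn3D : ¬ (3 : ℕ) ∣ D := by
    rw [hD]; exact Nat.not_dvd_ordCompl Nat.prime_three hC0
  have hDC : D ∣ C := by
    rw [hD]; exact Nat.div_dvd_of_dvd (Nat.ordProj_dvd C 3)
  by_cases hD1 : D = 1
  · exfalso
    rw [hD1, mul_one] at hCD
    rw [← hCD] at hNC
    by_cases h20 : N.factorization 2 = 0
    · by_cases h30 : C.factorization 3 = 0
      · rw [h20, h30] at hNC; simp at hNC; omega
      · exact h1 3 (C.factorization 3) Nat.prime_three (by omega)
          (by rw [h20] at hNC; simpa using hNC.symm)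
    · by_cases h30 : C.factorization 3 = 0
      · exact h1 2 (N.factorization 2) Nat.prime_two (by omega)
          (by rw [h30] at hNC; simpa using hNC.symm)
      · exact h2 (N.factorization 2) (C.factorization 3) (by omega) (by omega) hNC.symm
  · have hpp : D.minFac.Prime := Nat.minFac_prime hD1
    have hpD : D.minFac ∣ D := Nat.minFac_dvd D
    have hp2 : D.minFac ≠ 2 := by
      intro hq
      rw [← hq] at hn2C
      exact hn2C (dvd_trans hpD hDC)
    have hp3 : D.minFac ≠ 3 := by
      intro hq
      rw [← hq] at hn3D
      exact hn3D hpD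
    have hp4 : D.minFac ≠ 4 := by
      intro hq
      rw [hq] at hpp
      norm_num at hpp
    have hp5 : 5 ≤ D.minFac := by
      have := hpp.two_le
      omega
    have hpN : D.minFac ∣ N := dvd_trans hpD (dvd_trans hDC hCN)
    have he1 : 1 ≤ N.factorization D.minFac := hpp.factorization_pos_of_dvd hN0 hpN
    obtain ⟨A, hA⟩ : ∃ A, A = N / D.minFac ^ N.factorization D.minFac := ⟨_, rfl⟩
    have hNA : D.minFac ^ N.factorization D.minFac * A = N := by
      rw [hA]; exact Nat.ordProj_mul_ordCompl_eq_self N D.minFac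
    have hcoA : Nat.Coprime A (D.minFac ^ N.factorization D.minFac) := by
      rw [hA]
      exact ((Nat.coprime_ordCompl hpp hN0).pow_left _).symm
    have hA2 : 2 ≤ A := by
      have hA0 : A ≠ 0 := by
        intro h0
        rw [h0, mul_zero] at hNA
        omega
      have hA1 : A ≠ 1 := by
        intro h1'
        rw [h1', mul_one] at hNA
        exact h1 D.minFac (N.factorization D.minFac) hpp he1 hNA.symm
      omega
    exact ⟨D.minFac, N.factorization D.minFac, A, hpp, hp5, he1, hA2,
      by rw [Nat.mul_comm] at hNA; exact hNA.symm, hcoA⟩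

theorem stmt_1' (N : ℕ) (hN : 2 ≤ N) :
    QuasiMonomiallyIrreducible N ↔
      ((∃ p n : ℕ, p.Prime ∧ 1 ≤ n ∧ N = p ^ n) ∨
        (∃ n m : ℕ, 1 ≤ n ∧ 1 ≤ m ∧ N = 2 ^ n * 3 ^ m)) := by
  haveI : NeZero N := ⟨by omega⟩
  constructor
  · intro hqmi
    by_contra hform
    obtain ⟨p, e, A, hpp, hp5, he1, hA2, hNdef, hco⟩ := exists_decomp N hN hform
    exact not_qmi N p e A hpp hp5 he1 hA2 hNdef hco hqmi
  · intro hform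
    intro κ hgcd
    have hk : IsUnit ((κ : ZMod N)) := isUnit_of_gcd_one hgcd
    rcases hform with ⟨p, n, hpp, hn1, hNdef⟩ | ⟨n, m, hn1, hm1, hNdef⟩
    · subst hNdef
      exact good_prime_pow p n hpp hn1 hk
    · exact good_two_three n m N hn1 hm1 hNdef hk

end Final

/-- `N ≥ 2` is quasi monomially irreducible iff `N = p^n` for a prime `p`
and `n ≥ 1`, or `N = 2^n * 3^m` with `n, m ≥ 1`. -/
theorem stmt_1 (N : ℕ) (hN : 2 ≤ N) :
    QuasiMonomiallyIrreducible N ↔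
      ((∃ p n : ℕ, p.Prime ∧ 1 ≤ n ∧ N = p ^ n) ∨
        (∃ n m : ℕ, 1 ≤ n ∧ 1 ≤ m ∧ N = 2 ^ n * 3 ^ m)) := by
  exact stmt_1' N hN
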